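/- If a real symmetric positive definite 3×3 matrix C with det C = 1 has at least two equal eigenvalues, then its invariants I₁ = tr C, I₂ = tr(cof C) satisfy the equation I₁³ + I₂³ - I₁²I₂²/4 - 9I₁I₂/2 + 27/4 = 0. -/
import Mathlib

lemma boundary_key (a c : ℝ) (h : a * a * c = 1) :
    (a + a + c) ^ 3 + (a * a + a * c + a * c) ^ 3
      - (a + a + c) ^ 2 * (a * a + a * c + a * c) ^ 2 / 4
      - 9 * (a + a + c) * (a * a + a * c + a * c) / 2 + 27 / 4 = 0 := by
  linear_combination (a ^ 3 + 15 / 4 * a ^ 2 * c + 3 * a * c ^ 2 - c ^ 3 - 27 / 4) * h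

theorem repeated_eigenvalue_on_boundary (C : Matrix (Fin 3) (Fin 3) ℝ)
    (hsymm : C.IsSymm) (hpd : C.PosDef) (hdet : C.det = 1)
    (hrep : ∃ i j : Fin 3, i ≠ j ∧ hpd.1.eigenvalues i = hpd.1.eigenvalues j) :
    C.trace ^ 3 + C.adjugate.trace ^ 3 - C.trace ^ 2 * C.adjugate.trace ^ 2 / 4
      - 9 * C.trace * C.adjugate.trace / 2 + 27 / 4 = 0 := by
  have hA := hpd.1
  set e := hA.eigenvalues with he
  set U : Matrix (Fin 3) (Fin 3) ℝ := (hA.eigenvectorUnitary : Matrix (Fin 3) (Fin 3) ℝ)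
    with hU
  have hUU : star U * U = 1 := (Matrix.mem_unitaryGroup_iff').mp hA.eigenvectorUnitary.2
  have hspec : C = U * Matrix.diagonal e * star U := by
    simpa using hA.spectral_theorem
  -- trace
  have htr : C.trace = e 0 + e 1 + e 2 := by
    rw [hspec, Matrix.trace_mul_cycle, hUU, Matrix.one_mul,
      Matrix.trace_diagonal, Fin.sum_univ_three]
  -- adjugate trace
  have hadj : C.adjugate.trace = e 0 * e 1 + e 0 * e 2 + e 1 * e 2 := by
    have h1 : C.adjugate = (star U).adjugate * ((Matrix.diagonal e).adjugate * U.adjugate) := by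
      rw [hspec, Matrix.adjugate_mul_distrib, Matrix.adjugate_mul_distrib]
    have h2 : U.adjugate * (star U).adjugate = 1 := by
      rw [← Matrix.adjugate_mul_distrib, hUU, Matrix.adjugate_one]
    rw [h1, ← Matrix.mul_assoc, Matrix.trace_mul_cycle, h2, Matrix.one_mul,
      Matrix.adjugate_diagonal, Matrix.trace_diagonal, Fin.sum_univ_three]
    have e0 : (Finset.univ.erase (0 : Fin 3)) = {1, 2} := by decide
    have e1 : (Finset.univ.erase (1 : Fin 3)) = {0, 2} := by decide
    have e2 : (Finset.univ.erase (2 : Fin 3)) = {0, 1} := by decide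
    rw [e0, e1, e2]
    simp [Finset.prod_insert, Finset.prod_singleton]
    ring
  -- determinant
  have hprod : e 0 * e 1 * e 2 = 1 := by
    have := hA.det_eq_prod_eigenvalues
    rw [hdet, Fin.prod_univ_three] at this
    exact_mod_cast this.symm
  rw [htr, hadj]
  obtain ⟨i, j, hij, hije⟩ := hrep
  fin_cases i <;> fin_cases j
  · exact absurd rfl hij
  · rw [show e 0 = hA.eigenvalues 1 from hije] at hprod ⊢
    linear_combination boundary_key (e 1) (e 2) (by linear_combination hprod)
  · rw [show e 0 = hA.eigenvalues 2 from hije] at hprod ⊢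
    linear_combination boundary_key (e 2) (e 1) (by linear_combination hprod)
  · rw [show e 1 = hA.eigenvalues 0 from hije] at hprod ⊢
    linear_combination boundary_key (e 0) (e 2) (by linear_combination hprod)
  · exact absurd rfl hij
  · rw [show e 1 = hA.eigenvalues 2 from hije] at hprod ⊢
    linear_combination boundary_key (e 2) (e 0) (by linear_combination hprod)
  · rw [show e 2 = hA.eigenvalues 0 from hije] at hprod ⊢
    linear_combination boundary_key (e 0) (e 1) (by linear_combination hprod)
  · rw [show e 2 = hA.eigenvalues 1 from hije] at hprod ⊢
    linear_combination boundary_key (e 1) (e 0) (by linear_combination hprod)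
  · exact absurd rfl hij
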